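/- Every finite connected left-distributive quandle is Latin. -/

import Mathlib

universe u

/-- Every element of the right-translation group is a quandle automorphism. -/
private theorem quandle_aux_auto {X : Type u} (op : X → X → X)
    (rsd : ∀ a b c, op (op a b) c = op (op a c) (op b c))
    {σ : Equiv.Perm X}
    (hσ : σ ∈ Subgroup.closure {σ : Equiv.Perm X | ∃ w : X, ∀ z, σ z = op z w}) :
    ∀ x y : X, σ (op x y) = op (σ x) (σ y) := by
  refine Subgroup.closure_induction
    (p := fun σ _ => ∀ x y : X, σ (op x y) = op (σ x) (σ y)) ?_ ?_ ?_ ?_ hσ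
  · rintro τ ⟨w, hw⟩ x y
    simp only [hw]
    exact rsd x y w
  · intro x y
    rfl
  · intro σ₁ σ₂ h₁ h₂ ih₁ ih₂ x y
    simp only [Equiv.Perm.mul_apply, ih₂, ih₁]
  · intro τ hτ ih x y
    have h := ih (τ⁻¹ x) (τ⁻¹ y)
    rw [Equiv.Perm.inv_def, Equiv.apply_symm_apply, Equiv.apply_symm_apply] at h
    rw [← h, Equiv.Perm.inv_def, Equiv.symm_apply_apply]

/-- Main auxiliary result, proved by strong induction on the cardinality. -/
private theorem quandle_aux : ∀ (n : ℕ), ∀ {X : Type u} [Fintype X] (op : X → X → X),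
    Nat.card X = n →
    (∀ a, op a a = a) →
    (∀ b, Function.Bijective (fun a => op a b)) →
    (∀ a b c, op (op a b) c = op (op a c) (op b c)) →
    (∀ a b c, op a (op b c) = op (op a b) (op a c)) →
    (∀ p q : X,
      ∃ σ ∈ Subgroup.closure {σ : Equiv.Perm X | ∃ w : X, ∀ z, σ z = op z w}, σ p = q) →
    ∀ a : X, Function.Bijective (fun b => op a b) := by
  intro n
  induction n using Nat.strong_induction_on with
  | _ n IH =>
    intro X instX op hn idem rinv rsd ld conn a
    classical
    -- It suffices to prove surjectivity.
    suffices hs : Function.Surjective (fun b => op a b) by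
      exact ⟨Finite.injective_iff_surjective.mpr hs, hs⟩
    by_contra hsurj
    rw [Function.Surjective] at hsurj
    push_neg at hsurj
    obtain ⟨b₀, hb₀'⟩ := hsurj
    have hb₀ : b₀ ∉ Set.range (op a) := by
      rintro ⟨u, hu⟩
      exact hb₀' u hu
    -- The image S of the left translation by `a`.
    set S : Set X := Set.range (op a) with hSdef
    have memS : ∀ u : X, op a u ∈ S := fun u => ⟨u, rfl⟩
    have haS : a ∈ S := ⟨a, idem a⟩
    have hSclosed : ∀ x y : X, x ∈ S → y ∈ S → op x y ∈ S := by
      rintro x y ⟨u, rfl⟩ ⟨v, rfl⟩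
      exact ⟨op u v, ld a u v⟩
    -- the subquandle structure on S
    set op' : ↥S → ↥S → ↥S := fun x y => ⟨op x.1 y.1, hSclosed _ _ x.2 y.2⟩ with hop'
    have idem' : ∀ x : ↥S, op' x x = x := fun x => Subtype.ext (idem x.1)
    have rinv' : ∀ y : ↥S, Function.Bijective (fun x : ↥S => op' x y) := by
      intro y
      rw [← Finite.injective_iff_bijective]
      intro x₁ x₂ h
      exact Subtype.ext ((rinv y.1).injective (congrArg Subtype.val h))
    have rsd' : ∀ x y z : ↥S, op' (op' x y) z = op' (op' x z) (op' y z) :=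
      fun x y z => Subtype.ext (rsd x.1 y.1 z.1)
    have ld' : ∀ x y z : ↥S, op' x (op' y z) = op' (op' x y) (op' x z) :=
      fun x y z => Subtype.ext (ld x.1 y.1 z.1)
    -- transporting right translations to S along the surjection f_a
    have key : ∀ σ : Equiv.Perm X,
        σ ∈ Subgroup.closure {σ : Equiv.Perm X | ∃ w : X, ∀ z, σ z = op z w} →
        ∃ τ ∈ Subgroup.closure {τ : Equiv.Perm ↥S | ∃ w : ↥S, ∀ z, τ z = op' z w},
          ∀ u : X, (↑(τ ⟨op a u, memS u⟩) : X) = op a (σ u) := by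
      intro σ hσ
      refine Subgroup.closure_induction
        (p := fun σ _ =>
          ∃ τ ∈ Subgroup.closure {τ : Equiv.Perm ↥S | ∃ w : ↥S, ∀ z, τ z = op' z w},
            ∀ u : X, (↑(τ ⟨op a u, memS u⟩) : X) = op a (σ u)) ?_ ?_ ?_ ?_ hσ
      · rintro τX ⟨w, hw⟩
        set d : ↥S := ⟨op a w, memS w⟩ with hd
        refine ⟨Equiv.ofBijective _ (rinv' d), Subgroup.subset_closure ⟨d, fun z => rfl⟩,
          fun u => ?_⟩
        show op (op a u) (op a w) = op a (τX u)
        rw [hw u]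
        exact (ld a u w).symm
      · exact ⟨1, Subgroup.one_mem _, fun u => rfl⟩
      · rintro σ₁ σ₂ h₁ h₂ ⟨τ₁, hm₁, hp₁⟩ ⟨τ₂, hm₂, hp₂⟩
        refine ⟨τ₁ * τ₂, Subgroup.mul_mem _ hm₁ hm₂, fun u => ?_⟩
        have e2 : τ₂ ⟨op a u, memS u⟩ = ⟨op a (σ₂ u), memS (σ₂ u)⟩ := Subtype.ext (hp₂ u)
        simp only [Equiv.Perm.mul_apply, e2]
        exact hp₁ (σ₂ u)
      · rintro σ hσ' ⟨τ, hm, hp⟩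
        refine ⟨τ⁻¹, Subgroup.inv_mem _ hm, fun u => ?_⟩
        have h1 : τ ⟨op a (σ⁻¹ u), memS (σ⁻¹ u)⟩ = ⟨op a u, memS u⟩ := by
          apply Subtype.ext
          rw [hp (σ⁻¹ u), Equiv.Perm.inv_def, Equiv.apply_symm_apply]
        have h2 : τ⁻¹ ⟨op a u, memS u⟩ = ⟨op a (σ⁻¹ u), memS (σ⁻¹ u)⟩ := by
          rw [← h1, Equiv.Perm.inv_def, Equiv.symm_apply_apply]
        rw [h2]
    -- S is connected
    have conn' : ∀ p q : ↥S,
        ∃ τ ∈ Subgroup.closure {τ : Equiv.Perm ↥S | ∃ w : ↥S, ∀ z, τ z = op' z w}, τ p = q := by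
      intro p q
      obtain ⟨u, hu⟩ := p.2
      obtain ⟨v, hv⟩ := q.2
      obtain ⟨σ, hσ, hσuv⟩ := conn u v
      obtain ⟨τ, hτ, hτp⟩ := key σ hσ
      refine ⟨τ, hτ, ?_⟩
      have hp' : p = ⟨op a u, memS u⟩ := Subtype.ext hu.symm
      rw [hp']
      apply Subtype.ext
      rw [hτp u, hσuv, hv]
    -- S is strictly smaller than X
    have hlt : Nat.card ↥S < n := by
      rw [← hn, Nat.card_coe_set_eq, ← Set.ncard_univ X]
      exact Set.ncard_lt_ncard ⟨Set.subset_univ S, fun h => hb₀ (h (Set.mem_univ b₀))⟩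
        (Set.toFinite _)
    -- induction hypothesis: S is Latin
    have latin : ∀ x : ↥S, Function.Bijective (fun y : ↥S => op' x y) :=
      IH (Nat.card ↥S) hlt op' rfl idem' rinv' rsd' ld' conn'
    -- for every x ∈ S, the image of left translation by x is again S
    have stepB : ∀ x : X, x ∈ S → Set.range (op x) = S := by
      intro x hx
      obtain ⟨σ, hσ, hσa⟩ := conn a x
      have hauto := quandle_aux_auto op rsd hσ
      have himg : Set.range (op x) = σ '' S := by
        ext z
        constructor
        · rintro ⟨u, rfl⟩
          refine ⟨op a (σ⁻¹ u), memS _, ?_⟩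
          rw [hauto a (σ⁻¹ u), hσa, Equiv.Perm.inv_def, Equiv.apply_symm_apply]
        · rintro ⟨s, ⟨u, rfl⟩, rfl⟩
          exact ⟨σ u, by rw [hauto a u, hσa]⟩
      have hsub : S ⊆ Set.range (op x) := by
        intro s hs
        obtain ⟨y, hy⟩ := (latin ⟨x, hx⟩).surjective ⟨s, hs⟩
        exact ⟨y.1, congrArg Subtype.val hy⟩
      have hcards : (Set.range (op x)).ncard = S.ncard := by
        rw [himg, Set.ncard_image_of_injective _ σ.injective]
      exact (Set.eq_of_subset_of_ncard_le hsub hcards.le (Set.toFinite _)).symm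
    -- S is invariant under the whole right-translation group
    have stepD : ∀ σ : Equiv.Perm X,
        σ ∈ Subgroup.closure {σ : Equiv.Perm X | ∃ w : X, ∀ z, σ z = op z w} →
        σ '' S = S := by
      intro σ hσ
      refine Subgroup.closure_induction (p := fun (σ : Equiv.Perm X) _ => σ '' S = S) ?_ ?_ ?_ ?_ hσ
      · rintro τ ⟨w, hw⟩
        have hsub : τ '' S ⊆ S := by
          rintro _ ⟨z, hz, rfl⟩
          rw [hw z, ← stepB z hz]
          exact ⟨w, rfl⟩
        refine Set.eq_of_subset_of_ncard_le hsub ?_ (Set.toFinite _)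
        rw [Set.ncard_image_of_injective _ τ.injective]
      · simp
      · intro σ₁ σ₂ h₁ h₂ ih₁ ih₂
        rw [Equiv.Perm.coe_mul, Set.image_comp, ih₂, ih₁]
      · intro τ hτ ih
        conv_lhs => rw [← ih]
        rw [← Set.image_comp]
        have hfun : (⇑τ⁻¹ ∘ ⇑τ) = id := funext fun z => Equiv.symm_apply_apply τ z
        rw [hfun, Set.image_id]
    -- conclusion: b₀ ∈ S, contradiction
    obtain ⟨σ, hσ, hσab⟩ := conn a b₀
    have : b₀ ∈ S := by
      rw [← stepD σ hσ]
      exact ⟨a, haS, hσab⟩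
    exact hb₀ this

theorem stmt_14 {X : Type*} [Fintype X] (op : X → X → X)
    (idem : ∀ a, op a a = a)
    (rinv : ∀ b, Function.Bijective (fun a => op a b))
    (rsd : ∀ a b c, op (op a b) c = op (op a c) (op b c))
    (ld : ∀ a b c, op a (op b c) = op (op a b) (op a c))
    (conn : ∀ p q : X,
      ∃ σ ∈ Subgroup.closure {σ : Equiv.Perm X | ∃ w : X, ∀ z, σ z = op z w}, σ p = q) :
    ∀ a : X, Function.Bijective (fun b => op a b) :=
  quandle_aux (Nat.card X) op rfl idem rinv rsd ld conn
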